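/- arXiv:1907.04080 — 4 statements merged into one kernel-verified Lean document; each statement's English description precedes it below -/
import Mathlib

section
/- For two processors with linear time functions t_i(x) = a_i·x (0 < a_0 < a_1) and linear energy functions e_i(x) = b_i·x (0 < b_0 < b_1), every distribution of the form (x_t − Δ, y_t + Δ) with Δ ∈ (0, x_t] is dominated by the load-balanced distribution (x_t, y_t): its execution time a_1·(y_t + Δ) is strictly greater than the balanced time, and its dynamic energy b_0·x_t + b_1·y_t + (b_1 − b_0)·Δ is strictly greater than the balanced energy. Hence no such distribution is Pareto-optimal. -/
/-- Parallel execution time of distribution `(x, y)`. -/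
def ptime (a0 a1 x y : ℝ) : ℝ := max (a0 * x) (a1 * y)

/-- Dynamic energy of distribution `(x, y)`. -/
def penergy (b0 b1 x y : ℝ) : ℝ := b0 * x + b1 * y

/-- `(x, y)` is a Pareto-optimal distribution of workload `n`:
no feasible distribution dominates it. -/
def ParetoOpt2 (a0 a1 b0 b1 n x y : ℝ) : Prop :=
  0 ≤ x ∧ 0 ≤ y ∧ x + y = n ∧
  ¬ ∃ x' y', 0 ≤ x' ∧ 0 ≤ y' ∧ x' + y' = n ∧
    ptime a0 a1 x' y' ≤ ptime a0 a1 x y ∧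
    penergy b0 b1 x' y' ≤ penergy b0 b1 x y ∧
    (ptime a0 a1 x' y' < ptime a0 a1 x y ∨
     penergy b0 b1 x' y' < penergy b0 b1 x y)

/-- Every distribution `(x_t − Δ, y_t + Δ)` with `Δ ∈ (0, x_t]`
has strictly greater time and strictly greater energy than the load-balanced
distribution `(x_t, y_t)`, hence is not Pareto-optimal. -/
theorem stmt_2 (a0 a1 b0 b1 n xt yt : ℝ)
    (ha0 : 0 < a0) (ha01 : a0 < a1) (hb0 : 0 < b0) (hb01 : b0 < b1)
    (hxt : 0 ≤ xt) (hyt : 0 ≤ yt)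
    (hbal : a0 * xt = a1 * yt) (hsum : xt + yt = n) :
    ∀ Δ, Δ ∈ Set.Ioc (0:ℝ) xt →
      ptime a0 a1 (xt - Δ) (yt + Δ) = a1 * (yt + Δ) ∧
      ptime a0 a1 xt yt < ptime a0 a1 (xt - Δ) (yt + Δ) ∧
      penergy b0 b1 (xt - Δ) (yt + Δ) = b0 * xt + b1 * yt + (b1 - b0) * Δ ∧
      penergy b0 b1 xt yt < penergy b0 b1 (xt - Δ) (yt + Δ) ∧
      ¬ ParetoOpt2 a0 a1 b0 b1 n (xt - Δ) (yt + Δ) := by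
  intro Δ hΔ
  obtain ⟨hΔ0, hΔx⟩ := hΔ
  have ha1 : 0 < a1 := ha0.trans ha01
  have h1 : a0 * (xt - Δ) ≤ a1 * (yt + Δ) := by nlinarith
  have hpt : ptime a0 a1 (xt - Δ) (yt + Δ) = a1 * (yt + Δ) := max_eq_right h1
  have hptb : ptime a0 a1 xt yt = a1 * yt := by
    unfold ptime; rw [hbal]; exact max_self _
  have htlt : ptime a0 a1 xt yt < ptime a0 a1 (xt - Δ) (yt + Δ) := by
    rw [hpt, hptb]; nlinarith
  have hpe : penergy b0 b1 (xt - Δ) (yt + Δ) = b0 * xt + b1 * yt + (b1 - b0) * Δ := by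
    unfold penergy; ring
  have helt : penergy b0 b1 xt yt < penergy b0 b1 (xt - Δ) (yt + Δ) := by
    rw [hpe]; unfold penergy; nlinarith
  refine ⟨hpt, htlt, hpe, helt, ?_⟩
  rintro ⟨_, _, hsum', hno⟩
  exact hno ⟨xt, yt, hxt, hyt, hsum, htlt.le, helt.le, Or.inl htlt⟩
end

section
/- For two processors with linear time functions t_i(x) = a_i·x and linear energy functions e_i(x) = b_i·x, 0 < a_0 < a_1, 0 < b_0 < b_1, and workload n > 0, the Pareto-optimal front for (execution time, dynamic energy) contains infinitely many distinct solutions. In particular, the map Δ ↦ ((x_t + Δ, y_t − Δ)) from [0, y_t] into the set of Pareto-optimal distributions is injective, and y_t > 0. -/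
/-- For workload `n > 0` the Pareto front contains infinitely many
distinct solutions: `y_t > 0`, the map `Δ ↦ (x_t + Δ, y_t − Δ)` is injective on
`[0, y_t]`, its image consists of Pareto-optimal distributions, and the set of
Pareto-optimal distributions is infinite. -/
theorem stmt_4 (a0 a1 b0 b1 n xt yt : ℝ)
    (ha0 : 0 < a0) (ha01 : a0 < a1) (hb0 : 0 < b0) (hb01 : b0 < b1)
    (hn : 0 < n) (hxt : 0 ≤ xt) (hyt : 0 ≤ yt)
    (hbal : a0 * xt = a1 * yt) (hsum : xt + yt = n) :
    0 < yt ∧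
    Set.InjOn (fun Δ : ℝ => (xt + Δ, yt - Δ)) (Set.Icc 0 yt) ∧
    (∀ Δ, Δ ∈ Set.Icc (0:ℝ) yt → ParetoOpt2 a0 a1 b0 b1 n (xt + Δ) (yt - Δ)) ∧
    {P : ℝ × ℝ | ParetoOpt2 a0 a1 b0 b1 n P.1 P.2}.Infinite := by
  have ha1 : 0 < a1 := ha0.trans ha01
  have hytpos : 0 < yt := by
    rcases hyt.lt_or_eq with h | h
    · exact h
    · exfalso
      have hxt0 : xt = 0 := by
        have : a0 * xt = 0 := by rw [hbal, ← h]; ring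
        exact (mul_eq_zero.mp this).resolve_left (ne_of_gt ha0)
      rw [hxt0, ← h] at hsum; linarith
  have hinj : Set.InjOn (fun Δ : ℝ => (xt + Δ, yt - Δ)) (Set.Icc 0 yt) := by
    intro d1 _ d2 _ h
    have := congrArg Prod.fst h
    simp only at this
    linarith
  have hpareto : ∀ Δ, Δ ∈ Set.Icc (0:ℝ) yt →
      ParetoOpt2 a0 a1 b0 b1 n (xt + Δ) (yt - Δ) := by
    intro Δ hΔ
    obtain ⟨hΔ0, hΔyt⟩ := hΔ
    set x := xt + Δ with hx
    set y := yt - Δ with hy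
    have hx0 : 0 ≤ x := by positivity
    have hy0 : 0 ≤ y := by simp [hy]; linarith
    have hxy : x + y = n := by rw [hx, hy]; linarith
    have htime : ptime a0 a1 x y = a0 * x := by
      apply max_eq_left
      calc a1 * y ≤ a1 * yt := by nlinarith
        _ = a0 * xt := hbal.symm
        _ ≤ a0 * x := by nlinarith
    refine ⟨hx0, hy0, hxy, ?_⟩
    rintro ⟨x', y', hx'0, hy'0, hxy', ht, he, hstrict⟩
    -- energy ≤ gives y' ≤ y
    have hyle : y' ≤ y := by
      have : b0 * x' + b1 * y' ≤ b0 * x + b1 * y := he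
      nlinarith
    have hxge : x ≤ x' := by linarith
    have ht' : a0 * x ≤ ptime a0 a1 x' y' :=
      le_trans (by nlinarith) (le_max_left _ _)
    have hteq : ptime a0 a1 x' y' = ptime a0 a1 x y := le_antisymm ht (htime ▸ ht')
    have hx'le : a0 * x' ≤ a0 * x := by
      have := le_max_left (a0 * x') (a1 * y')
      rw [show max (a0 * x') (a1 * y') = ptime a0 a1 x' y' from rfl, hteq, htime] at this
      exact this
    have hxeq : x' = x := le_antisymm (by nlinarith) hxge
    have hyeq : y' = y := by linarith
    rcases hstrict with h | h
    · rw [hteq] at h; exact lt_irrefl _ h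
    · rw [hxeq, hyeq] at h; exact lt_irrefl _ h
  refine ⟨hytpos, hinj, hpareto, ?_⟩
  have hIcc : (Set.Icc (0:ℝ) yt).Infinite := Set.Icc_infinite hytpos
  have himg : ((fun Δ : ℝ => (xt + Δ, yt - Δ)) '' Set.Icc 0 yt).Infinite :=
    hIcc.image hinj
  apply himg.mono
  rintro _ ⟨Δ, hΔ, rfl⟩
  exact hpareto Δ hΔ
end

section
/- For p processors each with a discrete dynamic energy function and a discrete time function each of cardinality at most m (plus value 0 at problem size 0), the cardinality of the Pareto-optimal front for (execution time, dynamic energy) over feasible distributions of any workload n is at most m·p + 1. -/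
open scoped NNReal

theorem stmt_11_aux (p m : ℕ) (Feas : (Fin p → ℕ) → Prop)
    (TE ED : (Fin p → ℕ) → ℝ≥0) (T : Finset ℝ≥0)
    (hTcard : T.card ≤ m * p + 1) (hmemT : ∀ X, Feas X → TE X ∈ T) :
    {v : ℝ≥0 × ℝ≥0 | ∃ X, Feas X ∧ v = (TE X, ED X) ∧
        ¬ ∃ Y, Feas Y ∧ TE Y ≤ TE X ∧ ED Y ≤ ED X ∧
          (TE Y < TE X ∨ ED Y < ED X)}.ncard ≤ m * p + 1 := by
  set S : Set (ℝ≥0 × ℝ≥0) :=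
    {v : ℝ≥0 × ℝ≥0 | ∃ X, Feas X ∧ v = (TE X, ED X) ∧
        ¬ ∃ Y, Feas Y ∧ TE Y ≤ TE X ∧ ED Y ≤ ED X ∧
          (TE Y < TE X ∨ ED Y < ED X)} with hS
  have hinj : Set.InjOn Prod.fst S := by
    intro v hv w hw hvw
    obtain ⟨X, hXf, hXv, hXnd⟩ := hv
    obtain ⟨Y, hYf, hYw, hYnd⟩ := hw
    have hT : TE X = TE Y := by
      have h1 := congrArg Prod.fst hXv
      have h2 := congrArg Prod.fst hYw
      simp_all
    have hE : ED X = ED Y := by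
      rcases lt_trichotomy (ED X) (ED Y) with h | h | h
      · exact absurd ⟨X, hXf, hT.le, h.le, Or.inr h⟩ hYnd
      · exact h
      · exact absurd ⟨Y, hYf, hT.symm.le, h.le, Or.inr h⟩ hXnd
    rw [hXv, hYw, hT, hE]
  have h1 : S.ncard = (Prod.fst '' S).ncard := (Set.ncard_image_of_injOn hinj).symm
  have hsub : Prod.fst '' S ⊆ (T : Set ℝ≥0) := by
    rintro x ⟨v, hv, rfl⟩
    obtain ⟨X, hXf, hXv, -⟩ := hv
    rw [hXv]
    exact hmemT X hXf
  have h2 : (Prod.fst '' S).ncard ≤ T.card := by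
    calc (Prod.fst '' S).ncard ≤ (T : Set ℝ≥0).ncard :=
          Set.ncard_le_ncard hsub T.finite_toSet
      _ = T.card := Set.ncard_coe_finset T
  omega

/-- for `p` processors with discrete time and energy functions of
cardinality at most `m` (plus value `0` at problem size `0`), the Pareto front
for (execution time, dynamic energy) over feasible distributions of workload
`n` has cardinality at most `m·p + 1`. -/
theorem stmt_11 (p m n : ℕ) (D : Fin p → Finset ℕ)
    (hDpos : ∀ i, ∀ x ∈ D i, 0 < x) (hDcard : ∀ i, (D i).card ≤ m)
    (t e : Fin p → ℕ → ℝ≥0) (ht0 : ∀ i, t i 0 = 0) (he0 : ∀ i, e i 0 = 0) :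
    (let Feas : (Fin p → ℕ) → Prop := fun X =>
       (∀ i, X i ∈ insert 0 (D i)) ∧ (∑ i, X i = n);
     let TE : (Fin p → ℕ) → ℝ≥0 := fun X => Finset.univ.sup fun i => t i (X i);
     let ED : (Fin p → ℕ) → ℝ≥0 := fun X => ∑ i, e i (X i);
     {v : ℝ≥0 × ℝ≥0 | ∃ X, Feas X ∧ v = (TE X, ED X) ∧
        ¬ ∃ Y, Feas Y ∧ TE Y ≤ TE X ∧ ED Y ≤ ED X ∧
          (TE Y < TE X ∨ ED Y < ED X)}.ncard) ≤ m * p + 1 := by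
  refine stmt_11_aux p m
    (fun X => (∀ i, X i ∈ insert 0 (D i)) ∧ (∑ i, X i = n))
    (fun X => Finset.univ.sup fun i => t i (X i))
    (fun X => ∑ i, e i (X i))
    (insert 0 (Finset.univ.biUnion fun i : Fin p => (D i).image (t i)))
    ?_ ?_
  · calc (insert 0 (Finset.univ.biUnion fun i : Fin p => (D i).image (t i))).card
        ≤ (Finset.univ.biUnion fun i : Fin p => (D i).image (t i)).card + 1 :=
          Finset.card_insert_le _ _
      _ ≤ (∑ i : Fin p, ((D i).image (t i)).card) + 1 :=
          Nat.add_le_add_right Finset.card_biUnion_le 1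
      _ ≤ (∑ _i : Fin p, m) + 1 := by
          refine Nat.add_le_add_right (Finset.sum_le_sum fun i _ => ?_) 1
          exact le_trans Finset.card_image_le (hDcard i)
      _ = m * p + 1 := by simp [Finset.sum_const, Nat.mul_comm]
  · intro X hX
    beta_reduce
    rcases isEmpty_or_nonempty (Fin p) with hp | hp
    · have h0 : (Finset.univ.sup fun i => t i (X i)) = 0 := by
        simp [Finset.univ_eq_empty]
      rw [h0]; exact Finset.mem_insert_self _ _
    · obtain ⟨i, -, hi⟩ := Finset.exists_mem_eq_sup Finset.univ
        Finset.univ_nonempty (fun i => t i (X i))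
      rcases Finset.mem_insert.mp (hX.1 i) with h0 | hD
      · have hz : (Finset.univ.sup fun i => t i (X i)) = 0 := by rw [hi, h0, ht0]
        rw [hz]; exact Finset.mem_insert_self _ _
      · refine Finset.mem_insert_of_mem ?_
        rw [hi]
        exact Finset.mem_biUnion.mpr ⟨i, Finset.mem_univ i,
          Finset.mem_image_of_mem _ hD⟩
end

section
/- For p ≥ 2 processors each with linear time function t_i(x) = a_i·x and linear energy function e_i(x) = b_i·x (all a_i, b_i > 0, pairwise distinct ratios so that a single fastest and single most energy-efficient processor exist), the Pareto-optimal front for (time, energy) of any workload n > 0 contains infinitely many distinct objective vectors. -/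
set_option maxHeartbeats 1000000


/-- for `p ≥ 2` processors with linear time functions
`t_i(x) = a_i·x` and linear energy functions `e_i(x) = b_i·x`, all coefficients
positive and pairwise distinct (so a single fastest and a single most
energy-efficient processor exist), the Pareto front for (time, energy) of any
workload `n > 0` contains infinitely many distinct objective vectors. -/
theorem stmt_16 (p : ℕ) (hp : 2 ≤ p) (a b : Fin p → ℝ)
    (ha : ∀ i, 0 < a i) (hb : ∀ i, 0 < b i)
    (ha' : ∀ i j, i ≠ j → a i ≠ a j) (hb' : ∀ i j, i ≠ j → b i ≠ b j)
    (n : ℝ) (hn : 0 < n) :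
    (let Feas : (Fin p → ℝ) → Prop := fun X => (∀ i, 0 ≤ X i) ∧ ∑ i, X i = n;
     let TE : (Fin p → ℝ) → ℝ := fun X => ⨆ i, a i * X i;
     let ED : (Fin p → ℝ) → ℝ := fun X => ∑ i, b i * X i;
     {v : ℝ × ℝ | ∃ X, Feas X ∧ v = (TE X, ED X) ∧
        ¬ ∃ Y, Feas Y ∧ TE Y ≤ TE X ∧ ED Y ≤ ED X ∧
          (TE Y < TE X ∨ ED Y < ED X)}).Infinite := by
  dsimp only
  set Feas : (Fin p → ℝ) → Prop := fun X => (∀ i, 0 ≤ X i) ∧ ∑ i, X i = n with hFeas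
  set TE : (Fin p → ℝ) → ℝ := fun X => ⨆ i, a i * X i with hTEdef
  set ED : (Fin p → ℝ) → ℝ := fun X => ∑ i, b i * X i with hEDdef
  have hp0 : 0 < p := by omega
  haveI : Nonempty (Fin p) := ⟨⟨0, hp0⟩⟩
  -- i0 : the (unique) most energy-efficient processor
  obtain ⟨i0, -, hi0⟩ := Finset.exists_min_image Finset.univ b
    ⟨⟨0, hp0⟩, Finset.mem_univ _⟩
  -- some other processor exists
  obtain ⟨j, hj⟩ := Fintype.exists_ne_of_one_lt_card (by simpa using (show 1 < p by omega)) i0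
  -- i1 : the most energy-efficient among the others
  obtain ⟨i1, hi1mem, hi1⟩ := Finset.exists_min_image (Finset.univ.erase i0) b
    ⟨j, Finset.mem_erase.2 ⟨hj, Finset.mem_univ _⟩⟩
  have hi1ne : i1 ≠ i0 := (Finset.mem_erase.1 hi1mem).1
  have hA0 : 0 < a i0 := ha i0
  have hA1 : 0 < a i1 := ha i1
  have hB01 : b i0 < b i1 :=
    lt_of_le_of_ne (hi0 i1 (Finset.mem_univ _)) (fun h => hb' i1 i0 hi1ne h.symm)
  set Tlo : ℝ := a i0 * a i1 * n / (a i0 + a i1) with hTlo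
  set Thi : ℝ := a i0 * n with hThi
  have hsum : 0 < a i0 + a i1 := by linarith
  have hlt : Tlo < Thi := by
    rw [hTlo, hThi, div_lt_iff₀ hsum]
    nlinarith [mul_pos (mul_pos hA0 hA0) hn]
  -- the family of distributions
  set Z : ℝ → (Fin p → ℝ) := fun T i =>
    if i = i0 then T / a i0 else if i = i1 then n - T / a i0 else 0 with hZ
  have hZsum : ∀ T, ∑ i, Z T i = T / a i0 + (n - T / a i0) := by
    intro T
    rw [← Finset.add_sum_erase _ _ (Finset.mem_univ i0),
        ← Finset.add_sum_erase _ _ hi1mem]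
    have h1 : Z T i0 = T / a i0 := by simp [hZ]
    have h2 : Z T i1 = n - T / a i0 := by simp [hZ, hi1ne]
    have h3 : ∑ i ∈ (Finset.univ.erase i0).erase i1, Z T i = 0 := by
      apply Finset.sum_eq_zero
      intro i hi
      obtain ⟨hi1', hi0'⟩ := Finset.mem_erase.1 hi
      have hi0'' := (Finset.mem_erase.1 hi0').1
      simp [hZ, hi0'', hi1']
    rw [h1, h2, h3]; ring
  have hEDZ : ∀ T, ED (Z T) = b i0 * (T / a i0) + b i1 * (n - T / a i0) := by
    intro T
    show ∑ i, b i * Z T i = _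
    rw [← Finset.add_sum_erase _ _ (Finset.mem_univ i0),
        ← Finset.add_sum_erase _ _ hi1mem]
    have h1 : Z T i0 = T / a i0 := by simp [hZ]
    have h2 : Z T i1 = n - T / a i0 := by simp [hZ, hi1ne]
    have h3 : ∑ i ∈ (Finset.univ.erase i0).erase i1, b i * Z T i = 0 := by
      apply Finset.sum_eq_zero
      intro i hi
      obtain ⟨hi1', hi0'⟩ := Finset.mem_erase.1 hi
      have hi0'' := (Finset.mem_erase.1 hi0').1
      simp [hZ, hi0'', hi1']
    rw [h1, h2, h3]; ring
  -- each T in (Tlo, Thi) gives a Pareto-optimal point with TE = T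
  have key : ∀ T ∈ Set.Ioo Tlo Thi,
      (T, ED (Z T)) ∈ {v : ℝ × ℝ | ∃ X, Feas X ∧ v = (TE X, ED X) ∧
        ¬ ∃ Y, Feas Y ∧ TE Y ≤ TE X ∧ ED Y ≤ ED X ∧
          (TE Y < TE X ∨ ED Y < ED X)} := by
    intro T ⟨hT1, hT2⟩
    have hTpos : 0 < T := by
      have : 0 < Tlo := by
        rw [hTlo]
        positivity
      linarith
    have hx0pos : 0 < T / a i0 := div_pos hTpos hA0
    have hx0lt : T / a i0 < n := by
      rw [div_lt_iff₀ hA0]; rw [hThi] at hT2; linarith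
    have hTE1 : a i1 * (n - T / a i0) < T := by
      rw [hTlo, div_lt_iff₀ hsum] at hT1
      have h : a i1 * (n - T / a i0) * a i0 < T * a i0 := by
        field_simp
        nlinarith
      nlinarith
    have hFeasZ : Feas (Z T) := by
      constructor
      · intro i
        by_cases h0 : i = i0
        · simp [hZ, h0]; positivity
        · by_cases h1 : i = i1
          · simp [hZ, h0, h1, hi1ne]; linarith
          · simp [hZ, h0, h1]
      · rw [hZsum]; ring
    have hTEZ : TE (Z T) = T := by
      apply le_antisymm
      · apply ciSup_le
        intro i
        by_cases h0 : i = i0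
        · subst h0
          simp only [hZ, if_pos rfl]
          rw [mul_div_cancel₀ _ (ne_of_gt hA0)]
        · by_cases h1 : i = i1
          · subst h1
            have h2 : Z T i = n - T / a i0 := by simp [hZ, h0]
            rw [h2]; linarith
          · simp [hZ, h0, h1]; linarith
      · have := le_ciSup (Set.Finite.bddAbove
          (Set.finite_range (fun i => a i * Z T i))) i0
        have heq : a i0 * Z T i0 = T := by
          simp only [hZ, if_pos rfl]
          rw [mul_div_cancel₀ _ (ne_of_gt hA0)]
        rw [heq] at this
        exact this
    refine ⟨Z T, hFeasZ, by rw [hTEZ], ?_⟩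
    rintro ⟨Y, ⟨hYpos, hYsum⟩, hYT, hYE, hstrict⟩
    rw [hTEZ] at hYT hstrict
    -- Y i0 ≤ T / a i0
    have hy0 : a i0 * Y i0 ≤ TE Y :=
      le_ciSup (Set.Finite.bddAbove (Set.finite_range (fun i => a i * Y i))) i0
    have hy0le : Y i0 ≤ T / a i0 := by
      rw [le_div_iff₀ hA0]; nlinarith [hy0, hYT]
    -- energy lower bound for Y
    have hEDY : b i0 * Y i0 + b i1 * (n - Y i0) ≤ ED Y := by
      show _ ≤ ∑ i, b i * Y i
      rw [← Finset.add_sum_erase _ _ (Finset.mem_univ i0)]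
      have hrest : ∑ i ∈ Finset.univ.erase i0, Y i = n - Y i0 := by
        have := Finset.add_sum_erase Finset.univ Y (Finset.mem_univ i0)
        rw [hYsum] at this
        linarith
      have : b i1 * (n - Y i0) ≤ ∑ i ∈ Finset.univ.erase i0, b i * Y i := by
        rw [← hrest, Finset.mul_sum]
        apply Finset.sum_le_sum
        intro i hi
        exact mul_le_mul_of_nonneg_right (hi1 i hi) (hYpos i)
      linarith
    have hEDZle : ED (Z T) ≤ ED Y := by
      rw [hEDZ]
      nlinarith [hEDY, hy0le, hB01]
    rcases hstrict with hlt' | hlt'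
    · -- TE Y < T forces Y i0 < T / a i0, hence strictly worse energy
      have hy0lt : Y i0 < T / a i0 := by
        rw [lt_div_iff₀ hA0]; nlinarith [hy0]
      have : ED (Z T) < ED Y := by
        rw [hEDZ]
        nlinarith [hEDY, hy0lt, hB01]
      linarith
    · linarith
  -- conclude infinitude
  have hinj : Set.InjOn (fun T => (T, ED (Z T))) (Set.Ioo Tlo Thi) := by
    intro x _ y _ h
    exact congrArg Prod.fst h
  have himg := (Set.Ioo_infinite hlt).image hinj
  apply himg.mono
  rintro v ⟨T, hT, rfl⟩
  exact key T hT
end
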